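/- arXiv:2304.09009 — 2 statements merged into one kernel-verified Lean document; each statement's English description precedes it below -/
import Mathlib

section
/- Let R be a commutative ring, M an R-module, t ∈ R, and J = (t) the principal ideal generated by t. Assume that (0 :_M J) = (0 :_R J)·M, i.e., the submodule of elements of M annihilated by J equals the product of the annihilator ideal of J in R with M. Then the natural map J ⊗_R M → J·M, given by j ⊗ x ↦ j·x, is an isomorphism. -/
/-- Let `R` be a commutative ring, `M` an `R`-module, `t ∈ R` and
`J = (t)` the principal ideal generated by `t`. If `(0 :_M J) = (0 :_R J) • M`, then the
natural map `J ⊗[R] M → J • M`, `j ⊗ x ↦ j • x`, is an isomorphism; i.e. the natural map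
`J ⊗[R] M → M` is injective with range exactly the submodule `J • M`. -/
theorem tensor_with_principal_ideal_isomorphism
    {R : Type*} [CommRing R] {M : Type*} [AddCommGroup M] [Module R M]
    (t : R) (J : Ideal R) (hJ : J = Ideal.span {t})
    (h : Submodule.torsionBySet R M (J : Set R) =
      (Submodule.torsionBySet R R (J : Set R) : Ideal R) • (⊤ : Submodule R M)) :
    Function.Injective
      (TensorProduct.lift ((LinearMap.lsmul R M).comp J.subtype)) ∧
    LinearMap.range (TensorProduct.lift ((LinearMap.lsmul R M).comp J.subtype)) =
      J • (⊤ : Submodule R M) := by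
  set f := TensorProduct.lift ((LinearMap.lsmul R M).comp J.subtype) with hf
  have htJ : t ∈ J := by rw [hJ]; exact Ideal.subset_span rfl
  set t' : J := ⟨t, htJ⟩ with ht'
  -- the map m ↦ t' ⊗ m
  set g : M →ₗ[R] (TensorProduct R J M) :=
    (TensorProduct.mk R J M) t' with hg
  -- g is surjective
  have hgsurj : Function.Surjective g := by
    intro x
    induction x using TensorProduct.induction_on with
    | zero => exact ⟨0, map_zero g⟩
    | tmul j m =>
        obtain ⟨j, hj⟩ := j
        rw [hJ, Ideal.mem_span_singleton'] at hj
        obtain ⟨r, hr⟩ := hj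
        refine ⟨r • m, ?_⟩
        have h1 : (r • t' : J) = ⟨j, by rw [hJ]; exact hr ▸ Ideal.mem_span_singleton'.mpr ⟨r, rfl⟩⟩ :=
          Subtype.ext (by simpa [smul_eq_mul] using hr)
        simp only [hg, TensorProduct.mk_apply]
        rw [TensorProduct.tmul_smul, TensorProduct.smul_tmul', h1]
    | add x y hx hy =>
        obtain ⟨a, ha⟩ := hx
        obtain ⟨b, hb⟩ := hy
        exact ⟨a + b, by rw [map_add, ha, hb]⟩
  constructor
  · rw [injective_iff_map_eq_zero]
    intro x hx
    obtain ⟨m, rfl⟩ := hgsurj x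
    have hfg : f (g m) = t • m := by simp [hf, hg, ht']
    -- t • m = 0, so m is J-torsion
    have hm : m ∈ Submodule.torsionBySet R M (J : Set R) := by
      rw [Submodule.mem_torsionBySet_iff]
      rintro ⟨j, hj⟩
      show j • m = 0
      rw [SetLike.mem_coe, hJ, Ideal.mem_span_singleton] at hj
      obtain ⟨r, rfl⟩ := hj
      have : t • m = 0 := by rw [← hfg, hx]
      calc (t * r) • m = r • (t • m) := by rw [mul_comm, mul_smul]
        _ = 0 := by rw [this, smul_zero]
    rw [h] at hm
    -- now kill t' ⊗ m
    refine Submodule.smul_induction_on hm ?_ ?_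
    · intro a ha n _
      have hat : a * t = 0 := by
        have := (Submodule.mem_torsionBySet_iff _ _).mp ha ⟨t, htJ⟩
        simpa [mul_comm] using this
      have : (a • t' : J) = 0 := Subtype.ext (by simpa using hat)
      show g (a • n) = 0
      calc g (a • n) = a • (t' ⊗ₜ[R] n) := by
            simp [hg, TensorProduct.tmul_smul]
        _ = (a • t') ⊗ₜ[R] n := TensorProduct.smul_tmul' a t' n
        _ = 0 := by rw [this, TensorProduct.zero_tmul]
    · intro x y hx' hy'
      show g (x + y) = 0
      rw [map_add]
      exact by rw [hx', hy', add_zero]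
  · apply le_antisymm
    · rintro _ ⟨x, rfl⟩
      induction x using TensorProduct.induction_on with
      | zero => simp
      | tmul j m =>
          have : f (j ⊗ₜ m) = (j : R) • m := by simp [hf]
          rw [this]
          exact Submodule.smul_mem_smul j.2 trivial
      | add x y hx hy =>
          rw [map_add]
          exact Submodule.add_mem _ hx hy
    · rw [Submodule.smul_le]
      intro r hr m _
      exact ⟨(⟨r, hr⟩ : J) ⊗ₜ m, by simp [hf]⟩
end

section
/- Let k be a field of characteristic 0, let (T, n) be a noetherian local k-algebra, and fix i ∈ ℕ. Then T has liftable i-th local cohomology over k if and only if T has liftable i-th local cohomology over ℤ. -/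
universe u v w

/-- Units lift along quotients by nilpotent ideals. -/
theorem isUnit_of_isUnit_quotient_mk' {R : Type*} [CommRing R] {I : Ideal R}
    (hI : IsNilpotent I) {a : R} (h : IsUnit (Ideal.Quotient.mk I a)) : IsUnit a := by
  obtain ⟨n, hn⟩ := hI
  obtain ⟨b, hb⟩ := Ideal.Quotient.mk_surjective ((h.unit⁻¹ : Units (R ⧸ I)) : R ⧸ I)
  have hab : (Ideal.Quotient.mk I) (a * b - 1) = 0 := by
    rw [map_sub, map_mul, hb, map_one, sub_eq_zero]
    exact h.mul_val_inv
  have hmem : a * b - 1 ∈ I := Ideal.Quotient.eq_zero_iff_mem.mp hab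
  have hnil : IsNilpotent (a * b - 1) := by
    refine ⟨n, ?_⟩
    have := Ideal.pow_mem_pow hmem n
    rw [hn] at this
    simpa using this
  have : IsUnit (a * b) := by
    have := hnil.isUnit_add_left_of_commute isUnit_one (Commute.all _ _)
    simpa using this
  exact isUnit_of_mul_isUnit_left this

/-- The key lifting lemma, single universe: a characteristic-zero field map into `R ⧸ I`,
`I` nilpotent, lifts to `R`. -/
theorem exists_ringHom_lift_of_nilpotent {k R : Type u} [Field k] [CharZero k] [CommRing R]
    (I : Ideal R) (hI : IsNilpotent I) (φ : k →+* R ⧸ I) :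
    ∃ ψ : k →+* R, ∀ x, Ideal.Quotient.mk I (ψ x) = φ x := by
  classical
  -- `R` is a `ℚ`-algebra
  have hint : ∀ m : nonZeroDivisors ℤ, IsUnit ((Int.castRingHom R) m) := by
    rintro ⟨m, hm⟩
    apply isUnit_of_isUnit_quotient_mk' hI
    have h1 : (Ideal.Quotient.mk I) ((Int.castRingHom R) m) = φ ((m : k)) := by
      simp [map_intCast]
    rw [h1]
    exact (isUnit_iff_ne_zero.mpr (Int.cast_ne_zero.mpr
      (mem_nonZeroDivisors_iff_ne_zero.mp hm))).map φ
  let ρ : ℚ →+* R := IsLocalization.lift (M := nonZeroDivisors ℤ) (S := ℚ) hint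
  letI : Algebra ℚ R := ρ.toAlgebra
  have hφℚ : ∀ q : ℚ, φ (algebraMap ℚ k q) = algebraMap ℚ (R ⧸ I) q := by
    have h2 : φ.comp (algebraMap ℚ k) = algebraMap ℚ (R ⧸ I) := Subsingleton.elim _ _
    exact fun q => RingHom.congr_fun h2 q
  let φₐ : k →ₐ[ℚ] R ⧸ I := { φ with commutes' := hφℚ }
  -- transcendence basis
  obtain ⟨s, hs⟩ := exists_isTranscendenceBasis ℚ
    k
  have halgind : AlgebraicIndependent ℚ ((↑) : s → k) := hs.1
  -- lifts of the basis elements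
  choose lft hlft using fun b : s => Ideal.Quotient.mk_surjective (φ b)
  let α : MvPolynomial s ℚ →ₐ[ℚ] R := MvPolynomial.aeval lft
  have hα : ∀ p : MvPolynomial s ℚ,
      Ideal.Quotient.mk I (α p) = φ (MvPolynomial.aeval ((↑) : s → k) p) := by
    have h3 : (Ideal.Quotient.mkₐ ℚ I).comp α
        = φₐ.comp (MvPolynomial.aeval ((↑) : s → k)) := by
      apply MvPolynomial.algHom_ext
      intro b
      simp only [AlgHom.comp_apply, MvPolynomial.aeval_X]
      simpa [α, φₐ] using hlft b
    intro p
    simpa [α, φₐ] using AlgHom.congr_fun h3 p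
  have hunit : ∀ p : nonZeroDivisors (MvPolynomial s ℚ), IsUnit (α.toRingHom p) := by
    rintro ⟨p, hp⟩
    apply isUnit_of_isUnit_quotient_mk' hI
    have hp0 : p ≠ 0 := mem_nonZeroDivisors_iff_ne_zero.mp hp
    have hne : MvPolynomial.aeval ((↑) : s → k) p ≠ 0 := by
      intro h0
      exact hp0 (halgind (by simpa using h0))
    have : (Ideal.Quotient.mk I) (α.toRingHom p) = φ (MvPolynomial.aeval ((↑) : s → k) p) :=
      hα p
    rw [this]
    exact (isUnit_iff_ne_zero.mpr hne).map φ
  -- the field generated by the basis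
  let F := FractionRing (MvPolynomial s ℚ)
  letI : Algebra ℚ F := OreLocalization.instAlgebra
  let ρF : F →+* R := IsLocalization.lift (M := nonZeroDivisors (MvPolynomial s ℚ)) hunit
  have hρF : ∀ p : MvPolynomial s ℚ, ρF (algebraMap _ F p) = α p := fun p =>
    IsLocalization.lift_eq hunit p
  let L := IntermediateField.adjoin ℚ (Set.range ((↑) : s → k))
  let e := halgind.aevalEquivField
  let ρL : L →+* R := ρF.comp e.symm.toAlgHom.toRingHom
  have hρL : ∀ a : L, Ideal.Quotient.mk I (ρL a) = φ (a : k) := by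
    have key : (Ideal.Quotient.mk I).comp ρF
        = (φ.comp (algebraMap L k)).comp (e.toAlgHom.toRingHom : F →+* L) := by
      refine IsLocalization.ringHom_ext (nonZeroDivisors (MvPolynomial s ℚ))
        (RingHom.ext fun p => ?_)
      simp only [RingHom.comp_apply]
      rw [hρF, hα]
      congr 1
      exact (halgind.aevalEquivField_algebraMap_apply_coe p).symm
    intro a
    have := RingHom.congr_fun key (e.symm a)
    simpa [ρL] using this
  -- separable algebraic extension `k / L`
  haveI : Algebra.IsAlgebraic L k := hs.isAlgebraic_field
  haveI : Algebra.FormallyEtale L k := Algebra.FormallyEtale.of_isSeparable L k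
  letI : Algebra L R := ρL.toAlgebra
  let φL : k →ₐ[L] R ⧸ I :=
    { φ with
      commutes' := fun a => by
        have h4 : algebraMap L (R ⧸ I) a = Ideal.Quotient.mk I (ρL a) := rfl
        rw [h4, hρL]
        rfl }
  obtain ⟨ψₐ, hψ⟩ := Algebra.FormallySmooth.exists_lift I hI φL
  refine ⟨ψₐ.toRingHom, fun x => ?_⟩
  simpa [φL] using AlgHom.congr_fun hψ x

/-- Universe-polymorphic version via `ULift`. -/
theorem exists_ringHom_lift_of_nilpotent' {k : Type u} {R : Type w} [Field k] [CharZero k]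
    [CommRing R] (I : Ideal R) (hI : IsNilpotent I) (φ : k →+* R ⧸ I) :
    ∃ ψ : k →+* R, ∀ x, Ideal.Quotient.mk I (ψ x) = φ x := by
  let k' : Type (max u w) := ULift.{w} k
  let R' : Type (max u w) := ULift.{u} R
  let ek : k' ≃+* k := ULift.ringEquiv
  haveI : CharZero k' := by
    constructor
    intro m n h
    have h2 : (ek (m : k')) = ek (n : k') := congrArg ek h
    rw [map_natCast, map_natCast] at h2
    exact Nat.cast_injective (R := k) h2
  let eR : R' ≃+* R := ULift.ringEquiv
  let I' : Ideal R' := I.comap (eR : R' →+* R)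
  have hmap : I = I'.map (eR : R' →+* R) :=
    (Ideal.map_comap_of_surjective (eR : R' →+* R) eR.surjective I).symm
  have hI' : IsNilpotent I' := by
    obtain ⟨n, hn⟩ := hI
    refine ⟨n, ?_⟩
    have h1 : Ideal.map (eR : R' →+* R) (I' ^ n) = (Ideal.map (eR : R' →+* R) I') ^ n :=
      Ideal.map_pow _ _ _
    rw [← hmap, hn] at h1
    rw [Submodule.zero_eq_bot, eq_bot_iff]
    intro x hx
    have h2 : (eR : R' →+* R) x ∈ Ideal.map (eR : R' →+* R) (I' ^ n) :=
      Ideal.mem_map_of_mem _ hx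
    rw [h1, Submodule.zero_eq_bot, Ideal.mem_bot] at h2
    have hx0 : x = 0 := by
      apply eR.injective
      simpa using h2
    simp [hx0]
  let q : (R' ⧸ I') ≃+* R ⧸ I := Ideal.quotientEquiv I' I eR hmap
  let φ' : k' →+* R' ⧸ I' := (q.symm : (R ⧸ I) →+* R' ⧸ I').comp (φ.comp (ek : k' →+* k))
  obtain ⟨ψ', hψ'⟩ := exists_ringHom_lift_of_nilpotent I' hI' φ'
  refine ⟨((eR : R' →+* R).comp ψ').comp (ek.symm : k →+* k'), fun x => ?_⟩
  have hq : ∀ y : R', Ideal.Quotient.mk I ((eR : R' →+* R) y) = q (Ideal.Quotient.mk I' y) := by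
    intro y
    exact (Ideal.quotientEquiv_mk I' I eR hmap y).symm
  simp only [RingHom.comp_apply]
  rw [hq, hψ']
  simp [φ', RingEquiv.apply_symm_apply]

/-- A ring equivalence between `ℤ`-algebras is a `ℤ`-algebra equivalence. -/
noncomputable def RingEquiv.toIntAlgEquiv' {A B : Type*} [CommRing A] [CommRing B]
    [Algebra ℤ A] [Algebra ℤ B] (e : A ≃+* B) : A ≃ₐ[ℤ] B :=
  AlgEquiv.ofRingEquiv (f := e) (fun n => by
    have h1 : algebraMap ℤ A = Int.castRingHom A := RingHom.ext_int _ _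
    have h2 : algebraMap ℤ B = Int.castRingHom B := RingHom.ext_int _ _
    rw [h1, h2]
    simp [map_intCast])


/-- A noetherian local `A`-algebra `T` has *liftable `i`-th local cohomology over `A`* if for
every noetherian local `A`-algebra `(R, m)` and every nilpotent ideal `I ⊆ R` with an
`A`-algebra isomorphism `R ⧸ I ≅ T`, the natural map on local cohomology
`H^i_m(R) → H^i_m(R ⧸ I)` is surjective. -/
def HasLiftableLocalCohomology (A : Type u) [CommRing A]
    (T : Type v) [CommRing T] [Algebra A T] (i : ℕ) : Prop :=
  ∀ (R : Type w) [CommRing R] [IsNoetherianRing R] [IsLocalRing R] [Algebra A R]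
    (I : Ideal R), IsNilpotent I → Nonempty ((R ⧸ I) ≃ₐ[A] T) →
    Function.Surjective
      ((localCohomology (IsLocalRing.maximalIdeal R) i).map
        (ModuleCat.ofHom (Submodule.mkQ I)))

/-- Let `k` be a field of characteristic `0`, `(T, n)` a noetherian local
`k`-algebra, and `i ∈ ℕ`.  Then `T` has liftable `i`-th local cohomology over `k` if and
only if `T` has liftable `i`-th local cohomology over `ℤ` (i.e. where the lifting condition
is required for all noetherian local rings `R`). -/
theorem hasLiftableLocalCohomology_over_field_iff_over_int
    (k : Type u) [Field k] [CharZero k]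
    (T : Type v) [CommRing T] [IsNoetherianRing T] [IsLocalRing T] [Algebra k T] (i : ℕ) :
    HasLiftableLocalCohomology.{u, v, w} k T i ↔
      HasLiftableLocalCohomology.{0, v, w} ℤ T i := by
  constructor
  · -- over k → over ℤ
    intro h R _ _ _ _ I hI he
    obtain ⟨e⟩ := he
    let φ : k →+* R ⧸ I := (e.symm.toRingEquiv : T →+* R ⧸ I).comp (algebraMap k T)
    obtain ⟨ψ, hψ⟩ := exists_ringHom_lift_of_nilpotent' I hI φ
    letI : Algebra k R := ψ.toAlgebra
    refine h R I hI ⟨AlgEquiv.ofRingEquiv (f := e.toRingEquiv) (fun x => ?_)⟩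
    have h1 : algebraMap k (R ⧸ I) x = Ideal.Quotient.mk I (ψ x) := rfl
    show e.toRingEquiv (algebraMap k (R ⧸ I) x) = algebraMap k T x
    rw [h1, hψ]
    show e (e.symm (algebraMap k T x)) = algebraMap k T x
    exact e.apply_symm_apply _
  · -- over ℤ → over k
    intro h R _ _ _ _ I hI he
    obtain ⟨e⟩ := he
    exact h R I hI ⟨RingEquiv.toIntAlgEquiv' e.toRingEquiv⟩
end
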